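/- Let F be a finite field and γ a permutation of F fixing 0 and 1. If γ normalizes both the group of multiplications Γ(F×) = {x ↦ ax : a ∈ F×} and its conjugate s·Γ(F×)·s where s is the involution x ↦ -x+1, then γ is a field automorphism of F. -/
import Mathlib


/-- The group of multiplications `Γ(F×) = {x ↦ ax : a ∈ F×}` as a set of permutations. -/
def GammaMul {F : Type*} [Field F] : Set (Equiv.Perm F) :=
  {f | ∃ a : Fˣ, ∀ x : F, f x = (a : F) * x}

/-- a permutation of a finite field fixing `0` and `1` that normalizes
both `Γ(F×)` and `s Γ(F×) s` (with `s : x ↦ 1 - x`) is a field automorphism. -/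
theorem stmt1 {F : Type*} [Field F] [Fintype F]
    (s γ : Equiv.Perm F) (hs : ∀ x : F, s x = 1 - x)
    (h0 : γ 0 = 0) (h1 : γ 1 = 1)
    (hnorm1 : ∀ f : Equiv.Perm F, f ∈ GammaMul ↔ γ⁻¹ * f * γ ∈ GammaMul)
    (hnorm2 : ∀ f : Equiv.Perm F,
      f ∈ (fun g => s * g * s) '' GammaMul ↔ γ⁻¹ * f * γ ∈ (fun g => s * g * s) '' GammaMul) :
    ∃ e : F ≃+* F, ∀ x : F, γ x = e x := by
  have hγ0 : ∀ x : F, γ x = 0 ↔ x = 0 := fun x =>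
    ⟨fun h => γ.injective (by rw [h, h0]), fun h => by rw [h, h0]⟩
  -- Step A: γ is multiplicative
  have hmul : ∀ a x : F, γ (a * x) = γ a * γ x := by
    intro a x
    rcases eq_or_ne a 0 with rfl | ha
    · simp [h0]
    have hga : γ a ≠ 0 := fun h => ha ((hγ0 a).mp h)
    set f : Equiv.Perm F := Equiv.mulLeft₀ (γ a) hga with hf
    have hfm : f ∈ GammaMul := ⟨Units.mk0 (γ a) hga, fun y => rfl⟩
    obtain ⟨b, hb⟩ := (hnorm1 f).mp hfm
    have hb' : ∀ y : F, γ.symm (γ a * γ y) = (b : F) * y := by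
      intro y
      have hy := hb y
      simpa [hf, Equiv.Perm.mul_apply, Equiv.Perm.inv_def] using hy
    have hb1 : (b : F) = a := by
      have := hb' 1
      simp [h1] at this
      exact this.symm
    have hx := hb' x
    rw [hb1] at hx
    calc γ (a * x) = γ (γ.symm (γ a * γ x)) := by rw [hx]
      _ = γ a * γ x := γ.apply_symm_apply _
  -- ψ
  set ψ : F → F := fun t => 1 - γ (1 - t) with hψdef
  have hψ0 : ψ 0 = 0 := by simp [hψdef, h1]
  have hψ1 : ψ 1 = 1 := by simp [hψdef, h0]
  have hψinj : Function.Injective ψ := by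
    intro x y hxy
    have h2 : γ (1 - x) = γ (1 - y) := by
      have : (1:F) - γ (1-x) = 1 - γ (1-y) := hxy
      linear_combination -this
    have := γ.injective h2
    linear_combination -this
  -- Step B: ψ is multiplicative
  have hψmul : ∀ u y : F, ψ (u * y) = ψ u * ψ y := by
    intro u y
    rcases eq_or_ne u 0 with rfl | hu
    · simp [hψ0]
    have hψu : ψ u ≠ 0 := by
      intro h
      exact hu (hψinj (by rw [h, hψ0]))
    set g : Equiv.Perm F := Equiv.mulLeft₀ (ψ u) hψu with hg
    have hgm : g ∈ GammaMul := ⟨Units.mk0 (ψ u) hψu, fun z => rfl⟩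
    have hmem : s * g * s ∈ (fun g => s * g * s) '' GammaMul := ⟨g, hgm, rfl⟩
    obtain ⟨g', ⟨b, hb⟩, hg'⟩ := (hnorm2 _).mp hmem
    -- hg' : s * g' * s = γ⁻¹ * (s * g * s) * γ
    have key : ∀ z : F, γ (1 - (b : F) * (1 - z)) = 1 - ψ u * (1 - γ z) := by
      intro z
      have hx := Equiv.ext_iff.mp hg' z
      simp only [Equiv.Perm.mul_apply, Equiv.Perm.inv_def, hs, hb, hg,
        Equiv.mulLeft₀_apply] at hx
      -- hx : 1 - b * (1 - z) = γ.symm (1 - ψ u * (1 - γ z))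
      have := congrArg γ hx
      rwa [γ.apply_symm_apply] at this
    have key2 : ∀ w : F, ψ ((b : F) * w) = ψ u * ψ w := by
      intro w
      have hz := key (1 - w)
      have h1w : (1:F) - (1 - w) = w := by ring
      rw [h1w] at hz
      have hw : ψ w = 1 - γ (1 - w) := rfl
      simp only [hψdef]
      linear_combination -hz
    have hbu : (b : F) = u := by
      have := key2 1
      rw [hψ1, mul_one, mul_one] at this
      exact hψinj this
    have := key2 y
    rwa [hbu] at this
  -- key functional identity from multiplicativity of γ
  have hkey : ∀ t r : F, ψ (t + r - t * r) = ψ t + ψ r - ψ t * ψ r := by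
    intro t r
    have h := hmul (1 - t) (1 - r)
    have e1 : (1 - t) * ((1:F) - r) = 1 - (t + r - t * r) := by ring
    rw [e1] at h
    simp only [hψdef]
    linear_combination -h
  have hψne0 : ∀ t : F, t ≠ 0 → ψ t ≠ 0 := fun t ht h => ht (hψinj (by rw [h, hψ0]))
  -- Step D: ψ (t-1) = ψ t - 1 for t ≠ 0
  have hsub1 : ∀ t : F, t ≠ 0 → ψ (t - 1) = ψ t - 1 := by
    intro t ht
    rcases eq_or_ne t 1 with rfl | ht1
    · simp [hψ0, hψ1]
    have ht1' : t - 1 ≠ 0 := sub_ne_zero.mpr ht1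
    have hc : ψ t ≠ 0 := hψne0 t ht
    have hd : ψ (t - 1) ≠ 0 := hψne0 _ ht1'
    have he : ψ (t - 1) * ψ ((t - 1)⁻¹) = 1 := by
      rw [← hψmul, mul_inv_cancel₀ ht1', hψ1]
    have hr : t + t * (t - 1)⁻¹ - t * (t * (t - 1)⁻¹) = 0 := by
      field_simp
      ring
    have eq1 := hkey t (t * (t - 1)⁻¹)
    rw [hr, hψ0, hψmul t ((t-1)⁻¹)] at eq1
    -- eq1 : 0 = ψ t + ψ t * ψ (t-1)⁻¹ - ψ t * (ψ t * ψ (t-1)⁻¹)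
    have h3 : ψ t * ψ (t - 1) = ψ t * (ψ t - 1) := by
      linear_combination (-ψ (t-1)) * eq1 + (ψ t * ψ t - ψ t) * he
    exact mul_left_cancel₀ hc h3
  -- Step E: ψ (-1) = -1
  have hneg1 : ψ (-1 : F) = -1 := by
    rcases eq_or_ne (2 : F) 0 with h2 | h2
    · have : (-1 : F) = 1 := by linear_combination -h2
      rw [this, hψ1, ← this]
    · have hψ2 : ψ 2 = 2 := by
        have h' := hsub1 2 h2
        have h21 : (2 : F) - 1 = 1 := by norm_num
        rw [h21, hψ1] at h'
        linear_combination -h'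
      have hm1 : (-1 : F) ≠ 0 := by
        intro h; exact (one_ne_zero : (1:F) ≠ 0) (by linear_combination -h)
      have hA : ψ (-1 - 1) = ψ (-1) - 1 := hsub1 (-1) hm1
      have hB : ψ (-1 - 1) = ψ (-1) * 2 := by
        have : (-1 - 1 : F) = -1 * 2 := by ring
        rw [this, hψmul, hψ2]
      rw [hB] at hA
      linear_combination hA
  have hsub : ∀ t : F, ψ (t - 1) = ψ t - 1 := by
    intro t
    rcases eq_or_ne t 0 with rfl | ht
    · simpa [hψ0] using hneg1
    · exact hsub1 t ht
  have haddone : ∀ t : F, ψ (t + 1) = ψ t + 1 := by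
    intro t
    have := hsub (t + 1)
    simp only [add_sub_cancel_right] at this
    linear_combination -this
  -- ψ additive
  have hψadd : ∀ x y : F, ψ (x + y) = ψ x + ψ y := by
    intro x y
    rcases eq_or_ne y 0 with rfl | hy
    · simp [hψ0]
    have hxy : x + y = y * (x / y + 1) := by field_simp
    have hxdy : y * (x / y) = x := by field_simp
    rw [hxy, hψmul, haddone, mul_add, ← hψmul, hxdy, mul_one, add_comm]
  -- γ = ψ
  have hγψ : ∀ t : F, γ t = ψ t := by
    intro t
    have h1t : ψ (1 - t) = 1 - γ t := by
      simp only [hψdef, sub_sub_cancel]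
    have h2t : ψ (1 - t) = 1 - ψ t := by
      have : (1 : F) - t = 1 + (-1) * t := by ring
      rw [this, hψadd, hψ1, hψmul, hneg1]; ring
    rw [h2t] at h1t
    linear_combination h1t
  refine ⟨{ toEquiv := γ,
            map_mul' := fun a b => hmul a b,
            map_add' := fun a b => by
              show γ (a + b) = γ a + γ b
              rw [hγψ, hγψ, hγψ, hψadd] }, fun x => rfl⟩
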